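/- Let A be an [n_a = p^s·n'_a, k_a, d_a] repeated-root cyclic code over F_q (q a power of the prime p, gcd(n'_a, p) = 1) and let B be an [n_b, k_b, d_b] simple-root cyclic code over F_q with gcd(n_a, n_b) = 1. Let α be an element of order n'_a and β an element of order n_b in extension fields of F_q, and let integers f_a, f_b and nonzero integers m_a, m_b with gcd(n'_a, m_a) = gcd(n_b, m_b) = 1 be given. Assume there is an integer δ ≥ 2 such that for all codewords a(X) ∈ A and b(X) ∈ B the formal power series Σ_{i=0}^∞ a^{[p^s−1]}(α^{f_a + i m_a}) · b(β^{f_b + i m_b}) X^i is congruent to 0 modulo X^{δ−1}. Then the minimum Hamming distance of A satisfies d_a ≥ ⌈δ / d_b⌉. -/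

import Mathlib

open Polynomial

lemma lucas_aux' (p : ℕ) (hp : p.Prime) : ∀ (s m : ℕ),
    ((Nat.choose (m + (p ^ s - 1)) (p ^ s - 1) : ZMod p)) = if p ^ s ∣ m then 1 else 0 := by
  haveI : Fact p.Prime := ⟨hp⟩
  intro s
  induction s with
  | zero => intro m; simp
  | succ s ih =>
    intro m
    have hp2 : 2 ≤ p := hp.two_le
    have hP : 1 ≤ p ^ s := Nat.one_le_pow _ _ hp.pos
    have hps : p ^ (s + 1) = p * p ^ s := by ring
    have hmul : p * (p ^ s - 1) = p * p ^ s - p := by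
      rw [Nat.mul_sub, Nat.mul_one]
    have hle : p ≤ p * p ^ s := Nat.le_mul_of_pos_right p (by omega)
    have hk : p ^ (s + 1) - 1 = (p - 1) + p * (p ^ s - 1) := by omega
    have hkmod : (p ^ (s + 1) - 1) % p = p - 1 := by
      rw [hk, Nat.add_mul_mod_self_left, Nat.mod_eq_of_lt (by omega)]
    have hkdiv : (p ^ (s + 1) - 1) / p = p ^ s - 1 := by
      rw [hk, Nat.add_mul_div_left _ _ hp.pos, Nat.div_eq_of_lt (by omega), Nat.zero_add]
    have h := (ZMod.natCast_eq_natCast_iff _ _ p).mpr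
      (Choose.choose_modEq_choose_mod_mul_choose_div_nat
        (n := m + (p ^ (s + 1) - 1)) (k := p ^ (s + 1) - 1) (p := p))
    rw [h]
    by_cases hdvd : p ∣ m
    · obtain ⟨m', rfl⟩ := hdvd
      have hnform : p * m' + (p ^ (s + 1) - 1) = (p - 1) + p * (m' + (p ^ s - 1)) := by
        rw [hk]; ring
      have hnmod : (p * m' + (p ^ (s + 1) - 1)) % p = p - 1 := by
        rw [hnform, Nat.add_mul_mod_self_left, Nat.mod_eq_of_lt (by omega)]
      have hndiv : (p * m' + (p ^ (s + 1) - 1)) / p = m' + (p ^ s - 1) := by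
        rw [hnform, Nat.add_mul_div_left _ _ hp.pos, Nat.div_eq_of_lt (by omega), Nat.zero_add]
      rw [hnmod, hndiv, hkmod, hkdiv, Nat.choose_self]
      have hiff : p ^ (s + 1) ∣ p * m' ↔ p ^ s ∣ m' := by
        rw [hps]
        exact mul_dvd_mul_iff_left (by positivity)
      push_cast
      rw [ih m', one_mul]
      simp only [hiff]
    · have hmp : 1 ≤ m % p := by
        rcases Nat.eq_zero_or_pos (m % p) with h0 | h1
        · exact absurd (Nat.dvd_of_mod_eq_zero h0) hdvd
        · exact h1
      have hmplt : m % p < p := Nat.mod_lt _ hp.pos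
      have hnmod : (m + (p ^ (s + 1) - 1)) % p = m % p - 1 := by
        rw [hk, ← Nat.add_assoc, Nat.add_mul_mod_self_left, Nat.add_mod m (p - 1) p,
          Nat.mod_eq_of_lt (show p - 1 < p by omega)]
        have h2 : m % p + (p - 1) = (m % p - 1) + p := by omega
        rw [h2, Nat.add_mod_right, Nat.mod_eq_of_lt (by omega)]
      rw [hnmod, hkmod, Nat.choose_eq_zero_of_lt (by omega)]
      have : ¬ p ^ (s + 1) ∣ m := fun hc =>
        hdvd (dvd_trans (dvd_pow_self p (Nat.succ_ne_zero s)) hc)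
      simp [this]

/-- **Bound III: embedding into a repeated-root cyclic product code.**
Let `A` be the `[n_a = p^s n'_a, k_a, d_a]` repeated-root cyclic code with monic
generator `g_a` and `B` the `[n_b, k_b, d_b]` simple-root cyclic code with monic
generator `g_b` over `F_q`, with `gcd(n_a, n_b) = 1`; `B` has minimum distance `d_b`.
Let `α` have order `n'_a` and `β` have order `n_b` in an extension field `K`, and let
`f_a, f_b` and nonzero `m_a, m_b` with `gcd(n'_a, m_a) = gcd(n_b, m_b) = 1` be given.
If for some `δ ≥ 2` and all codewords `a ∈ A`, `b ∈ B` the first `δ - 1` coefficients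
of `Σ_i a^{[p^s-1]}(α^{f_a + i m_a}) · b(β^{f_b + i m_b}) X^i` vanish, then the minimum
Hamming distance of `A` is at least `⌈δ / d_b⌉`. -/
theorem repeatedRoot_product_code_bound
    {F K : Type*} [Field F] [Fintype F] [Field K] [Algebra F K]
    (p t s n'a nb : ℕ) (hp : p.Prime) (hq : Fintype.card F = p ^ t) (ht : 0 < t)
    (hn'a : Nat.Coprime n'a p) (hnbp : Nat.Coprime nb p)
    (hcop : Nat.Coprime (p ^ s * n'a) nb)
    (ga gb : F[X]) (hga_monic : ga.Monic) (hga_dvd : ga ∣ X ^ (p ^ s * n'a) - 1)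
    (hgb_monic : gb.Monic) (hgb_dvd : gb ∣ X ^ nb - 1)
    (α β : Kˣ) (hα : orderOf α = n'a) (hβ : orderOf β = nb)
    (fa fb ma mb : ℤ) (hma : ma ≠ 0) (hmb : mb ≠ 0)
    (hma' : Int.gcd (n'a : ℤ) ma = 1) (hmb' : Int.gcd (nb : ℤ) mb = 1)
    (δ db : ℕ) (hδ : 2 ≤ δ)
    (hBdist : IsLeast {w | ∃ b : F[X],
        b.degree < ((nb : ℕ) : WithBot ℕ) ∧ gb ∣ b ∧ b ≠ 0 ∧ w = b.support.card} db)
    (hzero : ∀ a : F[X], a.degree < ((p ^ s * n'a : ℕ) : WithBot ℕ) → ga ∣ a →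
      ∀ b : F[X], b.degree < ((nb : ℕ) : WithBot ℕ) → gb ∣ b →
      ∀ i < δ - 1,
        aeval ((α ^ (fa + (i : ℤ) * ma) : Kˣ) : K) (hasseDeriv (p ^ s - 1) a) *
          aeval ((β ^ (fb + (i : ℤ) * mb) : Kˣ) : K) b = 0) :
    ∀ a : F[X], a.degree < ((p ^ s * n'a : ℕ) : WithBot ℕ) → ga ∣ a → a ≠ 0 →
      δ ⌈/⌉ db ≤ a.support.card := by

  intro a hadeg hgaa ha0
  obtain ⟨⟨b, hbdeg, hgbb, hb0, hbw⟩, -⟩ := hBdist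
  -- positivity of n'a and nb
  have hn'pos : 0 < n'a := by
    rcases Nat.eq_zero_or_pos n'a with h0 | h1
    · exfalso
      rw [h0, Nat.mul_zero] at hadeg
      exact absurd (lt_of_le_of_lt (Polynomial.zero_le_degree_iff.mpr ha0) hadeg)
        (by simp)
    · exact h1
  have hnbpos : 0 < nb := by
    rcases Nat.eq_zero_or_pos nb with h0 | h1
    · exfalso
      rw [h0] at hbdeg
      exact absurd (lt_of_le_of_lt (Polynomial.zero_le_degree_iff.mpr hb0) hbdeg)
        (by simp)
    · exact h1
  have hdbpos : 0 < db := by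
    rw [hbw]
    exact Finset.card_pos.mpr (Polynomial.support_nonempty.mpr hb0)
  -- notation
  set P : ℕ := p ^ s with hPdef
  set n : ℕ := P * n'a with hndef
  have hPpos : 0 < P := pow_pos hp.pos s
  have hnpos : 0 < n := Nat.mul_pos hPpos hn'pos
  have hKk : P - 1 + 1 = P := Nat.sub_add_cancel hPpos
  -- goal reduction
  rw [ceilDiv_le_iff_le_mul hdbpos]
  by_contra hlt
  push_neg at hlt
  -- hlt : db * a.support.card < δ
  -- characteristic of F is p
  have hchar : CharP F p := by
    have h1 := CharP.char_is_prime F (ringChar F)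
    obtain ⟨m, hm⟩ := FiniteField.card F (ringChar F)
    have heq : p = ringChar F := by
      have hd : p ∣ ringChar F ^ (m : ℕ) := by
        rw [← hm.2, hq]; exact dvd_pow_self p (by omega)
      exact (Nat.prime_dvd_prime_iff_eq hp h1).mp (hp.dvd_of_dvd_pow hd)
    rw [heq]; infer_instance
  haveI : Fact p.Prime := ⟨hp⟩
  -- natDegree bounds
  have hand : a.natDegree < n := (Polynomial.natDegree_lt_iff_degree_lt ha0).mpr hadeg
  have hbnd : b.natDegree < nb := (Polynomial.natDegree_lt_iff_degree_lt hb0).mpr hbdeg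
  have hbsupp : b.support ⊆ Finset.range nb := fun k hk =>
    Finset.mem_range.mpr (lt_of_le_of_lt (Polynomial.le_natDegree_of_mem_supp k hk) hbnd)
  -- pick a nonzero coefficient of a
  obtain ⟨j₀, hj₀⟩ := Polynomial.support_nonempty.mpr ha0
  have hj₀ne : a.coeff j₀ ≠ 0 := Polynomial.mem_support_iff.mp hj₀
  have hj₀lt : j₀ < n := lt_of_le_of_lt (Polynomial.le_natDegree_of_mem_supp _ hj₀) hand
  set r : ℕ := (P - 1) - j₀ % P with hrdef
  have hjmod : j₀ % P < P := Nat.mod_lt _ hPpos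
  have hrP : r < P := by omega
  have hrn : r ≤ n := le_of_lt (lt_of_lt_of_le hrP (Nat.le_mul_of_pos_right P hn'pos))
  -- the shifted codeword
  set a' : F[X] := ∑ j ∈ Finset.range n, Polynomial.C (a.coeff j) * X ^ ((j + r) % n)
    with ha'def
  -- injectivity of the exponent shift
  have hinj : ∀ j < n, ∀ j' < n, (j + r) % n = (j' + r) % n → j = j' := by
    intro j hj j' hj' h
    have h2 : j ≡ j' [MOD n] := Nat.ModEq.add_right_cancel' r h
    rwa [Nat.ModEq, Nat.mod_eq_of_lt hj, Nat.mod_eq_of_lt hj'] at h2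
  -- coefficients of a'
  have hcoeff : ∀ j < n, a'.coeff ((j + r) % n) = a.coeff j := by
    intro j hj
    rw [ha'def, Polynomial.finset_sum_coeff]
    rw [Finset.sum_eq_single j]
    · simp [Polynomial.coeff_C_mul, Polynomial.coeff_X_pow]
    · intro j' hj' hne
      have : (j' + r) % n ≠ (j + r) % n := fun hc =>
        hne (hinj j' (Finset.mem_range.mp hj') j hj hc)
      simp only [Polynomial.coeff_C_mul, Polynomial.coeff_X_pow, mul_ite, mul_one, mul_zero]
      rw [if_neg (fun hc => this (Eq.symm hc))]
    · intro hc
      exact absurd (Finset.mem_range.mpr hj) hc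
  -- a' has degree < n
  have hdeg' : a'.degree < ((n : ℕ) : WithBot ℕ) := by
    rw [Polynomial.degree_lt_iff_coeff_zero]
    intro m hm
    rw [ha'def, Polynomial.finset_sum_coeff]
    apply Finset.sum_eq_zero
    intro j hj
    have : (j + r) % n ≠ m := fun hc => by
      have := Nat.mod_lt (j + r) hnpos
      omega
    simp only [Polynomial.coeff_C_mul, Polynomial.coeff_X_pow, mul_ite, mul_one, mul_zero]
    rw [if_neg (fun hc => this (Eq.symm hc))]
  -- ga divides a'
  have hdvd' : ga ∣ a' := by
    have h1 : ga ∣ a * X ^ r := hgaa.mul_right _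
    have hXn : (X : F[X]) ^ n - 1 ∣ a * X ^ r - a' := by
      have ha_sum : a * X ^ r = ∑ j ∈ Finset.range n, Polynomial.C (a.coeff j) * X ^ (j + r) := by
        conv_lhs => rw [Polynomial.as_sum_range' a n hand]
        rw [Finset.sum_mul]
        refine Finset.sum_congr rfl fun j _ => ?_
        rw [← Polynomial.C_mul_X_pow_eq_monomial, mul_assoc, ← pow_add]
      rw [ha_sum, ha'def, ← Finset.sum_sub_distrib]
      apply Finset.dvd_sum
      intro j _
      rw [← mul_sub]
      apply Dvd.dvd.mul_left
      have hsplit : X ^ (j + r) - (X : F[X]) ^ ((j + r) % n) =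
          X ^ ((j + r) % n) * (((X : F[X]) ^ n) ^ ((j + r) / n) - 1) := by
        rw [mul_sub, mul_one, ← pow_mul, ← pow_add]
        congr 1
        rw [Nat.add_comm, Nat.mod_add_div]
      rw [hsplit]
      apply Dvd.dvd.mul_left
      have := sub_dvd_pow_sub_pow ((X : F[X]) ^ n) 1 ((j + r) / n)
      rwa [one_pow] at this
    have : a' = a * X ^ r - (a * X ^ r - a') := by ring
    rw [this]
    exact dvd_sub h1 (hga_dvd.trans hXn)
  -- the "folded" coefficients
  set c : ℕ → F := fun u => a'.coeff (P * u + (P - 1)) with hcdef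
  have hexplt : ∀ u < n'a, P * u + (P - 1) < n := by
    intro u hu
    have : P * (u + 1) ≤ P * n'a := Nat.mul_le_mul_left P hu
    have h2 : P * (u + 1) = P * u + P := by ring
    omega
  -- inverse shift map
  have hinvmod : ∀ e < n, ((e + (n - r)) % n + r) % n = e := by
    intro e he
    rw [Nat.mod_add_mod, Nat.add_assoc, Nat.sub_add_cancel hrn, Nat.add_mod_right,
      Nat.mod_eq_of_lt he]
  set u₀ : ℕ := j₀ / P with hu₀def
  have hu₀lt : u₀ < n'a := Nat.div_lt_of_lt_mul (by rw [hndef] at hj₀lt; omega)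
  have hj₀split : j₀ = P * u₀ + j₀ % P := (Nat.div_add_mod j₀ P).symm ▸ rfl
  have hj₀r : j₀ + r = P * u₀ + (P - 1) := by omega
  have hc₀ : c u₀ = a.coeff j₀ := by
    rw [hcdef]
    have h1 : (j₀ + r) % n = P * u₀ + (P - 1) := by
      rw [hj₀r, Nat.mod_eq_of_lt (hexplt u₀ hu₀lt)]
    calc a'.coeff (P * u₀ + (P - 1)) = a'.coeff ((j₀ + r) % n) := by rw [h1]
      _ = a.coeff j₀ := hcoeff j₀ hj₀lt
  have hc₀ne : c u₀ ≠ 0 := hc₀ ▸ hj₀ne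
  have ha'0 : a' ≠ 0 := fun hc => hc₀ne (by rw [hcdef]; simp [hc])
  classical
  set S : Finset ℕ := (Finset.range n'a).filter (fun u => c u ≠ 0) with hSdef
  have hu₀S : u₀ ∈ S := Finset.mem_filter.mpr ⟨Finset.mem_range.mpr hu₀lt, hc₀ne⟩
  -- c u is a coefficient of a (via the inverse shift)
  have hcval : ∀ u < n'a, c u = a.coeff ((P * u + (P - 1) + (n - r)) % n) := by
    intro u hu
    have he : P * u + (P - 1) < n := hexplt u hu
    have h1 := hcoeff ((P * u + (P - 1) + (n - r)) % n) (Nat.mod_lt _ hnpos)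
    rw [hinvmod _ he] at h1
    exact h1.symm ▸ rfl
  -- |S| ≤ weight of a
  have hScard : S.card ≤ a.support.card := by
    apply Finset.card_le_card_of_injOn (fun u => (P * u + (P - 1) + (n - r)) % n)
    · intro u huS
      obtain ⟨hur, hune⟩ := Finset.mem_filter.mp huS
      simp only [Finset.mem_coe, Polynomial.mem_support_iff]
      rw [← hcval u (Finset.mem_range.mp hur)]
      exact hune
    · intro u huS u' hu'S heq
      obtain ⟨hur, -⟩ := Finset.mem_filter.mp huS
      obtain ⟨hu'r, -⟩ := Finset.mem_filter.mp hu'S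
      have hu := Finset.mem_range.mp hur
      have hu' := Finset.mem_range.mp hu'r
      have heq' : (P * u + (P - 1) + (n - r)) % n = (P * u' + (P - 1) + (n - r)) % n := heq
      have h1 : P * u + (P - 1) = P * u' + (P - 1) := by
        have e1 := hinvmod _ (hexplt u hu)
        have e2 := hinvmod _ (hexplt u' hu')
        rw [← e1, ← e2, heq']
      have : P * u = P * u' := by omega
      exact Nat.eq_of_mul_eq_mul_left hPpos this
  -- degree bound for the Hasse derivative
  have hnd' : a'.natDegree < n := (Polynomial.natDegree_lt_iff_degree_lt ha'0).mpr hdeg'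
  have hndh : (hasseDeriv (P - 1) a').natDegree < n :=
    lt_of_le_of_lt (Polynomial.natDegree_hasseDeriv_le a' (P - 1))
      (lt_of_le_of_lt (Nat.sub_le _ _) hnd')
  -- evaluation of the Hasse derivative of a' as a short exponential sum
  have hA : ∀ e : ℤ, aeval ((α ^ e : Kˣ) : K) (hasseDeriv (P - 1) a') =
      ∑ u ∈ S, algebraMap F K (c u) * ((α ^ (e * ((P * u : ℕ) : ℤ)) : Kˣ) : K) := by
    intro e
    rw [aeval_eq_sum_range' hndh]
    have step1 : ∀ m ∈ Finset.range n,
        (hasseDeriv (P - 1) a').coeff m • ((α ^ e : Kˣ) : K) ^ m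
        = if P ∣ m then (c (m / P)) • ((α ^ e : Kˣ) : K) ^ m else 0 := by
      intro m hm
      rw [Polynomial.hasseDeriv_coeff]
      have hch : (((m + (P - 1)).choose (P - 1) : ℕ) : F) = if P ∣ m then 1 else 0 := by
        have hl := lucas_aux' p hp s m
        have hmap : ((((m + (p ^ s - 1)).choose (p ^ s - 1) : ℕ)) : F)
            = (ZMod.castHom (dvd_refl p) F)
              ((((m + (p ^ s - 1)).choose (p ^ s - 1) : ℕ)) : ZMod p) := (map_natCast _ _).symm
        rw [hPdef, hmap, hl]
        split <;> simp
      rw [hch]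
      split
      · next hPm =>
        obtain ⟨u, rfl⟩ := hPm
        rw [one_mul, Nat.mul_div_cancel_left u hPpos, Algebra.smul_def]
      · rw [zero_mul, zero_smul]
    rw [Finset.sum_congr rfl step1, Finset.sum_ite, Finset.sum_const_zero, add_zero]
    have step2 : ∑ m ∈ (Finset.range n).filter (fun m => P ∣ m), (c (m / P)) • ((α ^ e : Kˣ) : K) ^ m
        = ∑ u ∈ Finset.range n'a, (c u) • ((α ^ e : Kˣ) : K) ^ (P * u) := by
      apply Finset.sum_bij' (fun m _ => m / P) (fun u _ => P * u)
      · intro m hm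
        obtain ⟨hmr, hmd⟩ := Finset.mem_filter.mp hm
        rw [Finset.mem_range] at hmr ⊢
        obtain ⟨u, rfl⟩ := hmd
        rw [Nat.mul_div_cancel_left u hPpos]
        exact lt_of_mul_lt_mul_left (by rwa [hndef] at hmr) (Nat.zero_le P)
      · intro u hu
        rw [Finset.mem_filter, Finset.mem_range]
        refine ⟨?_, Dvd.intro u rfl⟩
        rw [hndef]
        exact Nat.mul_lt_mul_left hPpos |>.mpr (Finset.mem_range.mp hu)
      · intro m hm
        obtain ⟨-, hmd⟩ := Finset.mem_filter.mp hm
        exact (Nat.mul_div_cancel' hmd)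
      · intro u hu
        exact Nat.mul_div_cancel_left u hPpos
      · intro m hm
        obtain ⟨-, hmd⟩ := Finset.mem_filter.mp hm
        rw [Nat.mul_div_cancel' hmd]
    rw [step2]
    rw [← Finset.sum_subset (Finset.filter_subset (fun u => c u ≠ 0) (Finset.range n'a))
      (fun u hu hnu => by
        have : c u = 0 := by
          by_contra hcc
          exact hnu (Finset.mem_filter.mpr ⟨hu, hcc⟩)
        rw [this, zero_smul])]
    refine Finset.sum_congr rfl fun u hu => ?_
    rw [Algebra.smul_def]
    congr 1
    rw [← Units.val_pow_eq_pow_val, ← zpow_natCast (α ^ e) (P * u), ← zpow_mul]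
  -- evaluation of b as a short exponential sum
  have hB : ∀ e : ℤ, aeval ((β ^ e : Kˣ) : K) b =
      ∑ k ∈ b.support, algebraMap F K (b.coeff k) * ((β ^ (e * (k : ℤ)) : Kˣ) : K) := by
    intro e
    rw [aeval_eq_sum_range' hbnd]
    rw [← Finset.sum_subset hbsupp
      (fun k hk hnk => by
        rw [Polynomial.notMem_support_iff.mp hnk, zero_smul])]
    refine Finset.sum_congr rfl fun k hk => ?_
    rw [Algebra.smul_def]
    congr 1
    rw [← Units.val_pow_eq_pow_val, ← zpow_natCast (β ^ e) k, ← zpow_mul]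
  -- the product index set, ratios and coefficients
  set T : Finset (ℕ × ℕ) := S ×ˢ b.support with hTdef
  set ρ : ℕ × ℕ → Kˣ := fun l => α ^ (ma * ((P * l.1 : ℕ) : ℤ)) * β ^ (mb * (l.2 : ℤ))
    with hρdef
  set γ : ℕ × ℕ → K := fun l => algebraMap F K (c l.1 * b.coeff l.2) *
      ((α ^ (fa * ((P * l.1 : ℕ) : ℤ)) * β ^ (fb * (l.2 : ℤ)) : Kˣ) : K) with hγdef
  -- vanishing of the first δ - 1 power sums
  have hs : ∀ i : ℕ, i < δ - 1 → ∑ l ∈ T, γ l * ((ρ l : Kˣ) : K) ^ i = 0 := by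
    intro i hi
    have h0 := hzero a' hdeg' hdvd' b hbdeg hgbb i hi
    rw [hA, hB, Finset.sum_mul_sum] at h0
    rw [← h0, hTdef, Finset.sum_product]
    refine Finset.sum_congr rfl fun u hu => Finset.sum_congr rfl fun k hk => ?_
    have eα : α ^ ((fa + (i : ℤ) * ma) * ((P * u : ℕ) : ℤ))
        = α ^ (fa * ((P * u : ℕ) : ℤ)) * (α ^ (ma * ((P * u : ℕ) : ℤ))) ^ i := by
      rw [← zpow_natCast (α ^ (ma * ((P * u : ℕ) : ℤ))) i, ← zpow_mul, ← zpow_add]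
      congr 1; ring
    have eβ : β ^ ((fb + (i : ℤ) * mb) * (k : ℤ))
        = β ^ (fb * (k : ℤ)) * (β ^ (mb * (k : ℤ))) ^ i := by
      rw [← zpow_natCast (β ^ (mb * (k : ℤ))) i, ← zpow_mul, ← zpow_add]
      congr 1; ring
    rw [eα, eβ]
    simp only [hγdef, hρdef, Units.val_mul, Units.val_pow_eq_pow_val, map_mul, mul_pow]
    ring
  -- the index set is small
  have hTcard : T.card ≤ δ - 1 := by
    have h1 : T.card = S.card * db := by rw [hTdef, Finset.card_product, hbw]
    have h2 : S.card * db ≤ a.support.card * db := Nat.mul_le_mul_right db hScard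
    have h3 : a.support.card * db = db * a.support.card := Nat.mul_comm _ _
    omega
  set k₀ : ℕ := b.natDegree with hk₀def
  have hk₀ : k₀ ∈ b.support := Polynomial.natDegree_mem_support_of_nonzero hb0
  have hk₀ne : b.coeff k₀ ≠ 0 := Polynomial.mem_support_iff.mp hk₀
  set l₀ : ℕ × ℕ := (u₀, k₀) with hl₀def
  have hl₀ : l₀ ∈ T := Finset.mem_product.mpr ⟨hu₀S, hk₀⟩
  have hN : 1 ≤ T.card := Finset.card_pos.mpr ⟨l₀, hl₀⟩
  -- the ratios are pairwise distinct
  have hcop' : Nat.Coprime n'a nb := Nat.Coprime.coprime_dvd_left (Dvd.intro_left P rfl) hcop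
  have hαord : α ^ ((n'a : ℕ) : ℤ) = 1 := by
    rw [zpow_natCast, ← hα, pow_orderOf_eq_one]
  have hβord : β ^ ((nb : ℕ) : ℤ) = 1 := by
    rw [zpow_natCast, ← hβ, pow_orderOf_eq_one]
  have hρinj : ∀ l ∈ T, ∀ l' ∈ T, ρ l = ρ l' → l = l' := by
    rintro ⟨u, k⟩ hl ⟨u', k'⟩ hl' hρeq
    obtain ⟨huS, hkS⟩ := Finset.mem_product.mp hl
    obtain ⟨hu'S, hk'S⟩ := Finset.mem_product.mp hl'
    have hu : u < n'a := Finset.mem_range.mp (Finset.mem_filter.mp huS).1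
    have hu' : u' < n'a := Finset.mem_range.mp (Finset.mem_filter.mp hu'S).1
    have hk : k < nb := Finset.mem_range.mp (hbsupp hkS)
    have hk' : k' < nb := Finset.mem_range.mp (hbsupp hk'S)
    set A : ℤ := ma * ((P * u : ℕ) : ℤ) with hAdef
    set A' : ℤ := ma * ((P * u' : ℕ) : ℤ) with hA'def
    set B : ℤ := mb * ((k : ℕ) : ℤ) with hBdef
    set B' : ℤ := mb * ((k' : ℕ) : ℤ) with hB'def
    have hρeq' : α ^ A * β ^ B = α ^ A' * β ^ B' := hρeq
    have key : α ^ (A - A') = β ^ (B' - B) := by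
      rw [zpow_sub, zpow_sub, ← div_eq_mul_inv, ← div_eq_mul_inv, div_eq_div_iff_mul_eq_mul, hρeq']
      exact mul_comm _ _
    have hg1 : (α ^ (A - A')) ^ (n'a : ℕ) = 1 := by
      rw [← zpow_natCast (α ^ (A - A')), ← zpow_mul, mul_comm, zpow_mul, hαord, one_zpow]
    have hg2 : (α ^ (A - A')) ^ (nb : ℕ) = 1 := by
      rw [key, ← zpow_natCast (β ^ (B' - B)), ← zpow_mul, mul_comm, zpow_mul, hβord, one_zpow]
    have hone : α ^ (A - A') = 1 := by
      have hd : orderOf (α ^ (A - A')) ∣ Nat.gcd n'a nb :=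
        Nat.dvd_gcd (orderOf_dvd_of_pow_eq_one hg1) (orderOf_dvd_of_pow_eq_one hg2)
      rw [Nat.Coprime.gcd_eq_one hcop', Nat.dvd_one] at hd
      exact orderOf_eq_one_iff.mp hd
    have hAA : ((n'a : ℕ) : ℤ) ∣ A - A' := by
      rw [← hα]
      exact orderOf_dvd_iff_zpow_eq_one.mpr hone
    have huu : u = u' := by
      have hAA' : A - A' = (ma * (P : ℤ)) * ((u : ℤ) - (u' : ℤ)) := by
        rw [hAdef, hA'def]; push_cast; ring
      rw [hAA'] at hAA
      have hcma : IsCoprime ((n'a : ℕ) : ℤ) ma := Int.isCoprime_iff_gcd_eq_one.mpr hma'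
      have hcP : IsCoprime ((n'a : ℕ) : ℤ) ((P : ℕ) : ℤ) :=
        Nat.isCoprime_iff_coprime.mpr (Nat.Coprime.pow_right s hn'a)
      have hdu : ((n'a : ℕ) : ℤ) ∣ ((u : ℤ) - (u' : ℤ)) :=
        (IsCoprime.mul_right hcma hcP).dvd_of_dvd_mul_left hAA
      have : ((u : ℤ) - (u' : ℤ)) = 0 := by
        apply Int.eq_zero_of_abs_lt_dvd hdu
        rw [abs_sub_lt_iff]
        constructor <;> (push_cast; omega)
      omega
    have hBB : ((nb : ℕ) : ℤ) ∣ B' - B := by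
      rw [← hβ]
      apply orderOf_dvd_iff_zpow_eq_one.mpr
      rw [← key, hAdef, hA'def, huu, sub_self, zpow_zero]
    have hkk : k = k' := by
      have hBB' : B' - B = mb * ((k' : ℤ) - (k : ℤ)) := by
        rw [hBdef, hB'def]; push_cast; ring
      rw [hBB'] at hBB
      have hcmb : IsCoprime ((nb : ℕ) : ℤ) mb := Int.isCoprime_iff_gcd_eq_one.mpr hmb'
      have hdk : ((nb : ℕ) : ℤ) ∣ ((k' : ℤ) - (k : ℤ)) :=
        hcmb.dvd_of_dvd_mul_left hBB
      have : ((k' : ℤ) - (k : ℤ)) = 0 := by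
        apply Int.eq_zero_of_abs_lt_dvd hdk
        rw [abs_sub_lt_iff]
        constructor <;> (push_cast; omega)
      omega
    exact Prod.ext huu hkk
  -- the annihilator polynomial
  set f : K[X] := ∏ l ∈ T.erase l₀, (X - Polynomial.C ((ρ l : Kˣ) : K)) with hfdef
  have hfdeg : f.natDegree = T.card - 1 := by
    rw [hfdef, Polynomial.natDegree_prod_of_monic _ _ (fun l _ => monic_X_sub_C _)]
    simp [Polynomial.natDegree_X_sub_C, Finset.card_erase_of_mem hl₀]
  have hfdeglt : f.natDegree < T.card := by omega
  have key0 : ∑ l ∈ T, γ l * f.eval ((ρ l : Kˣ) : K) = 0 := by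
    have h1 : ∀ l ∈ T, γ l * f.eval ((ρ l : Kˣ) : K)
        = ∑ i ∈ Finset.range T.card, f.coeff i * (γ l * ((ρ l : Kˣ) : K) ^ i) := by
      intro l hl
      rw [Polynomial.eval_eq_sum_range' hfdeglt, Finset.mul_sum]
      exact Finset.sum_congr rfl fun i _ => by ring
    rw [Finset.sum_congr rfl h1, Finset.sum_comm]
    apply Finset.sum_eq_zero
    intro i hi
    rw [← Finset.mul_sum, hs i (lt_of_lt_of_le (Finset.mem_range.mp hi) hTcard), mul_zero]
  have key1 : ∑ l ∈ T, γ l * f.eval ((ρ l : Kˣ) : K) = γ l₀ * f.eval ((ρ l₀ : Kˣ) : K) := by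
    apply Finset.sum_eq_single_of_mem l₀ hl₀
    intro l hl hne
    have hz : f.eval ((ρ l : Kˣ) : K) = 0 := by
      rw [hfdef, Polynomial.eval_prod]
      apply Finset.prod_eq_zero (Finset.mem_erase.mpr ⟨hne, hl⟩)
      simp
    rw [hz, mul_zero]
  have hfne : f.eval ((ρ l₀ : Kˣ) : K) ≠ 0 := by
    rw [hfdef, Polynomial.eval_prod]
    apply Finset.prod_ne_zero_iff.mpr
    intro l hl
    simp only [Polynomial.eval_sub, Polynomial.eval_X, Polynomial.eval_C]
    rw [sub_ne_zero]
    intro hc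
    obtain ⟨hlne, hlT⟩ := Finset.mem_erase.mp hl
    exact hlne (hρinj l hlT l₀ hl₀ (Units.ext hc.symm))
  have hγne : γ l₀ ≠ 0 := by
    rw [hγdef]
    apply mul_ne_zero
    · rw [map_ne_zero_iff _ (algebraMap F K).injective]
      exact mul_ne_zero hc₀ne hk₀ne
    · exact Units.ne_zero _
  exact hγne ((mul_eq_zero.mp (key1 ▸ key0)).resolve_right hfne)
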